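/- Let p be a prime and β ∈ ℚ_p with |β|_p > 1. Let S be an infinite set of positive integers with 1 ∈ S, and suppose that for every k ∈ S the beta-expansion of k (viewed as an element of ℤ_p) is eventually periodic. Then β is algebraic over ℚ, and its minimal polynomial over ℚ, normalized to be monic and written F(X) = X^n − a_1X^{n−1} − ⋯ − a_n, has all coefficients a_j ∈ ℤ[1/p] and satisfies: v_p(a_1) < 0, v_p(a_j) ≥ v_p(a_1) for all 1 ≤ j ≤ n, and every root of F in ℂ has archimedean absolute value at most 1. (By the paper's characterization of Pisot–Chabauty and Salem–Chabauty numbers, these conditions say exactly that β is a Pisot–Chabauty or Salem–Chabauty number.) -/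

import Mathlib

open Polynomial Finset



section UltraAux
variable {p : ℕ} [Fact p.Prime]

lemma padic_norm_sum_le {ι : Type*} (s : Finset ι) (f : ι → ℚ_[p]) (C : ℝ) (hC : 0 ≤ C)
    (h : ∀ i ∈ s, ‖f i‖ ≤ C) : ‖∑ i ∈ s, f i‖ ≤ C := by
  classical
  induction s using Finset.cons_induction with
  | empty => simpa using hC
  | cons a s ha ih =>
    rw [Finset.sum_cons]
    refine le_trans (Padic.nonarchimedean _ _) (max_le (h a (Finset.mem_cons_self a s)) ?_)
    exact ih fun i hi => h i (Finset.mem_cons_of_mem hi)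

lemma padic_norm_sum_lt {ι : Type*} (s : Finset ι) (f : ι → ℚ_[p]) (C : ℝ) (hC : 0 < C)
    (h : ∀ i ∈ s, ‖f i‖ < C) : ‖∑ i ∈ s, f i‖ < C := by
  classical
  induction s using Finset.cons_induction with
  | empty => simpa using hC
  | cons a s ha ih =>
    rw [Finset.sum_cons]
    refine lt_of_le_of_lt (Padic.nonarchimedean _ _)
      (max_lt (h a (Finset.mem_cons_self a s)) ?_)
    exact ih fun i hi => h i (Finset.mem_cons_of_mem hi)


lemma exists_argmax_strict (f : ℕ → ℝ) (d : ℕ) :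
    ∃ r, r ≤ d ∧ (∀ i, i ≤ d → f i ≤ f r) ∧ (∀ i, r < i → i ≤ d → f i < f r) := by
  induction d with
  | zero =>
    refine ⟨0, le_refl 0, ?_, ?_⟩
    · intro i hi; have : i = 0 := Nat.le_zero.1 hi; rw [this]
    · intro i hi hi'; omega
  | succ d ih =>
    obtain ⟨r, h1, h2, h3⟩ := ih
    rcases le_or_gt (f (d + 1)) (f r) with h | h
    · rcases lt_or_eq_of_le h with h' | h'
      · refine ⟨r, by omega, ?_, ?_⟩
        · intro i hi
          rcases Nat.lt_succ_iff_lt_or_eq.1 (Nat.lt_succ_of_le hi) with h'' | h''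
          · exact h2 i (by omega)
          · rw [h'']; exact h
        · intro i hri hi
          rcases Nat.lt_succ_iff_lt_or_eq.1 (Nat.lt_succ_of_le hi) with h'' | h''
          · exact h3 i hri (by omega)
          · rw [h'']; exact h'
      · refine ⟨d + 1, le_refl _, ?_, ?_⟩
        · intro i hi
          rcases Nat.lt_succ_iff_lt_or_eq.1 (Nat.lt_succ_of_le hi) with h'' | h''
          · exact le_trans (h2 i (by omega)) (le_of_eq h'.symm)
          · rw [h'']
        · intro i hri hi; omega
    · refine ⟨d + 1, le_refl _, ?_, ?_⟩
      · intro i hi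
        rcases Nat.lt_succ_iff_lt_or_eq.1 (Nat.lt_succ_of_le hi) with h'' | h''
        · exact le_trans (h2 i (by omega)) (le_of_lt h)
        · rw [h'']
      · intro i hri hi; omega

/-- Gauss-type lemma: if a product of monic polynomials over `ℚ_[p]` has all coefficients
of norm at most `B` (with `1 ≤ B`), then so does each monic factor. -/
lemma gauss_coeff_bound (F H : ℚ_[p][X]) (hF : F.Monic) (hH : H.Monic) (B : ℝ) (hB : 1 ≤ B)
    (hb : ∀ i, ‖(F * H).coeff i‖ ≤ B) : ∀ i, ‖F.coeff i‖ ≤ B := by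
  set dF := F.natDegree with hdF
  set dH := H.natDegree with hdH
  obtain ⟨r, hrd, hrmax, hrstrict⟩ := exists_argmax_strict (fun i => ‖F.coeff i‖) dF
  obtain ⟨s, hsd, hsmax, hsstrict⟩ := exists_argmax_strict (fun i => ‖H.coeff i‖) dH
  set M := ‖F.coeff r‖ with hMdef
  set N := ‖H.coeff s‖ with hNdef
  have hM1 : 1 ≤ M := by
    have := hrmax dF (le_refl dF)
    simp only [hdF, hF.coeff_natDegree, norm_one] at this
    exact this
  have hN1 : 1 ≤ N := by
    have := hsmax dH (le_refl dH)
    simp only [hdH, hH.coeff_natDegree, norm_one] at this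
    exact this
  have hMle : ∀ i, ‖F.coeff i‖ ≤ M := by
    intro i
    rcases le_or_gt i dF with h | h
    · exact hrmax i h
    · rw [Polynomial.coeff_eq_zero_of_natDegree_lt h, norm_zero]; linarith
  have hNle : ∀ i, ‖H.coeff i‖ ≤ N := by
    intro i
    rcases le_or_gt i dH with h | h
    · exact hsmax i h
    · rw [Polynomial.coeff_eq_zero_of_natDegree_lt h, norm_zero]; linarith
  have hrval : ‖F.coeff r‖ = M := rfl
  have hsval : ‖H.coeff s‖ = N := rfl
  have hrlt : ∀ i, r < i → ‖F.coeff i‖ < M := by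
    intro i hi
    rcases le_or_gt i dF with h | h
    · exact hrstrict i hi h
    · rw [Polynomial.coeff_eq_zero_of_natDegree_lt h, norm_zero]; linarith
  have hslt : ∀ i, s < i → ‖H.coeff i‖ < N := by
    intro i hi
    rcases le_or_gt i dH with h | h
    · exact hsstrict i hi h
    · rw [Polynomial.coeff_eq_zero_of_natDegree_lt h, norm_zero]; linarith
  have hM0 : (0:ℝ) < M := lt_of_lt_of_le one_pos hM1
  have hN0 : (0:ℝ) < N := lt_of_lt_of_le one_pos hN1
  -- the key coefficient
  have hkey : ‖(F * H).coeff (r + s)‖ = M * N := by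
    rw [Polynomial.coeff_mul]
    have hmem : ((r, s) : ℕ × ℕ) ∈ Finset.HasAntidiagonal.antidiagonal (r + s) := by
      simp [Finset.HasAntidiagonal.mem_antidiagonal]
    rw [← Finset.add_sum_erase _ _ hmem]
    have hrest : ‖∑ x ∈ (Finset.HasAntidiagonal.antidiagonal (r + s)).erase (r, s),
        F.coeff x.1 * H.coeff x.2‖ < M * N := by
      refine padic_norm_sum_lt _ _ _ (mul_pos hM0 hN0) ?_
      rintro ⟨i, j⟩ hx
      obtain ⟨hne, hmem'⟩ := Finset.mem_erase.1 hx
      have hij : i + j = r + s := Finset.HasAntidiagonal.mem_antidiagonal.1 hmem'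
      rw [norm_mul]
      rcases lt_trichotomy i r with h | h | h
      · have hj : s < j := by omega
        calc ‖F.coeff i‖ * ‖H.coeff j‖ ≤ M * ‖H.coeff j‖ :=
              mul_le_mul_of_nonneg_right (hMle i) (norm_nonneg _)
          _ < M * N := by exact (mul_lt_mul_iff_right₀ hM0).2 (hslt j hj)
      · exact absurd (by simp [h, show j = s by omega]) hne
      · calc ‖F.coeff i‖ * ‖H.coeff j‖ ≤ ‖F.coeff i‖ * N :=
              mul_le_mul_of_nonneg_left (hNle j) (norm_nonneg _)
          _ < M * N := by exact (mul_lt_mul_iff_left₀ hN0).2 (hrlt i h)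
    have hlead : ‖F.coeff r * H.coeff s‖ = M * N := by
      rw [norm_mul, hrval, hsval]
    rw [Padic.add_eq_max_of_ne (by rw [hlead]; exact ne_of_gt hrest), hlead,
      max_eq_left (le_of_lt hrest)]
  have : M * N ≤ B := hkey ▸ hb (r + s)
  intro i
  calc ‖F.coeff i‖ ≤ M := hMle i
    _ ≤ M * N := le_mul_of_one_le_right (le_of_lt hM0) hN1
    _ ≤ B := this

end UltraAux

noncomputable def Qpoly (e : ℕ → ℚ) (k j m : ℕ) : ℚ[X] :=
  Polynomial.C (k:ℚ) * Polynomial.X ^ (j+m) - Polynomial.C (k:ℚ) * Polynomial.X ^ j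
  - (∑ t ∈ Finset.range (j+m), Polynomial.C (e t) * Polynomial.X ^ (j+m-1-t))
  + ∑ t ∈ Finset.range j, Polynomial.C (e t) * Polynomial.X ^ (j-1-t)

lemma Qpoly_coeff_top (e : ℕ → ℚ) (k j m : ℕ) (hm : 1 ≤ m) :
    (Qpoly e k j m).coeff (j+m) = k := by
  have h1 : ∀ (f : ℕ → ℕ) (hf : ∀ t ∈ Finset.range (j+m), f t < j + m),
      (∑ t ∈ Finset.range (j+m), Polynomial.C (e t) * Polynomial.X ^ (f t)).coeff (j+m) = 0 := by
    intro f hf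
    rw [Polynomial.finset_sum_coeff]
    refine Finset.sum_eq_zero fun t ht => ?_
    rw [Polynomial.coeff_C_mul, Polynomial.coeff_X_pow, if_neg (by have := hf t ht; omega),
      mul_zero]
  simp only [Qpoly, Polynomial.coeff_add, Polynomial.coeff_sub, Polynomial.coeff_C_mul,
    Polynomial.coeff_X_pow]
  rw [if_neg (show ¬(j + m = j) by omega)]
  have h3 : (∑ t ∈ Finset.range (j+m), Polynomial.C (e t) *
      Polynomial.X ^ (j+m-1-t)).coeff (j+m) = 0 := h1 _ (fun t ht => by omega)
  have h4 : (∑ t ∈ Finset.range j, Polynomial.C (e t) *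
      Polynomial.X ^ (j-1-t)).coeff (j+m) = 0 := by
    rw [Polynomial.finset_sum_coeff]
    refine Finset.sum_eq_zero fun t ht => ?_
    rw [Polynomial.coeff_C_mul, Polynomial.coeff_X_pow,
      if_neg (by have := Finset.mem_range.1 ht; omega), mul_zero]
  rw [h3, h4]
  simp

lemma Qpoly_natDegree_le (e : ℕ → ℚ) (k j m : ℕ) :
    (Qpoly e k j m).natDegree ≤ j + m := by
  refine le_trans (Polynomial.natDegree_add_le _ _) (max_le (le_trans
    (Polynomial.natDegree_sub_le _ _) (max_le (le_trans (Polynomial.natDegree_sub_le _ _)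
      (max_le ?_ ?_)) ?_)) ?_)
  · exact le_trans (Polynomial.natDegree_C_mul_le _ _) (le_of_eq (Polynomial.natDegree_X_pow _))
  · exact le_trans (Polynomial.natDegree_C_mul_le _ _)
      (le_trans (le_of_eq (Polynomial.natDegree_X_pow _)) (by omega))
  · refine Polynomial.natDegree_sum_le_of_forall_le _ _ fun t ht => ?_
    exact le_trans (Polynomial.natDegree_C_mul_le _ _)
      (le_trans (le_of_eq (Polynomial.natDegree_X_pow _)) (by omega))
  · refine Polynomial.natDegree_sum_le_of_forall_le _ _ fun t ht => ?_
    exact le_trans (Polynomial.natDegree_C_mul_le _ _)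
      (le_trans (le_of_eq (Polynomial.natDegree_X_pow _)) (by omega))

lemma Qpoly_monic (e : ℕ → ℚ) (j m : ℕ) (hm : 1 ≤ m) : (Qpoly e 1 j m).Monic := by
  refine Polynomial.monic_of_natDegree_le_of_coeff_eq_one (j+m) (Qpoly_natDegree_le _ _ _ _) ?_
  rw [Qpoly_coeff_top _ _ _ _ hm, Nat.cast_one]

lemma Qpoly_ne_zero (e : ℕ → ℚ) (k j m : ℕ) (hm : 1 ≤ m) (hk : 0 < k) :
    Qpoly e k j m ≠ 0 := by
  intro h
  have := Qpoly_coeff_top e k j m hm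
  rw [h, Polynomial.coeff_zero] at this
  exact_mod_cast absurd this.symm (by exact_mod_cast Nat.pos_iff_ne_zero.1 hk)

section Bound
variable {l : ℕ} [Fact l.Prime]

lemma padic_norm_sub_le' (x y : ℚ_[l]) : ‖x - y‖ ≤ max ‖x‖ ‖y‖ := by
  rw [sub_eq_add_neg]
  exact le_trans (Padic.nonarchimedean _ _) (by rw [norm_neg])

lemma Qpoly_coeff_norm_le (e : ℕ → ℚ) (k j m : ℕ) (B : ℝ) (hB : 1 ≤ B)
    (he : ∀ t, ‖((e t : ℚ) : ℚ_[l])‖ ≤ B) (i : ℕ) :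
    ‖(((Qpoly e k j m).coeff i : ℚ) : ℚ_[l])‖ ≤ B := by
  have hcast : ∀ (a : ℚ) (n : ℕ), (((Polynomial.C a * Polynomial.X ^ n : ℚ[X]).coeff i : ℚ) :
      ℚ_[l]) = if i = n then (a : ℚ_[l]) else 0 := by
    intro a n
    rw [Polynomial.coeff_C_mul, Polynomial.coeff_X_pow]
    split_ifs with h
    · push_cast; ring
    · push_cast; ring
  have hCXbound : ∀ (a : ℚ) (n : ℕ), ‖((a : ℚ) : ℚ_[l])‖ ≤ B →
      ‖(((Polynomial.C a * Polynomial.X ^ n : ℚ[X]).coeff i : ℚ) : ℚ_[l])‖ ≤ B := by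
    intro a n ha
    rw [hcast]
    split_ifs with h
    · exact ha
    · rw [norm_zero]; linarith
  have hsumbound : ∀ (L : ℕ) (f : ℕ → ℕ),
      ‖(((∑ t ∈ Finset.range L, Polynomial.C (e t) * Polynomial.X ^ (f t)).coeff i : ℚ) :
        ℚ_[l])‖ ≤ B := by
    intro L f
    rw [Polynomial.finset_sum_coeff]
    push_cast
    refine padic_norm_sum_le _ _ _ (by linarith) fun t ht => ?_
    exact hCXbound _ _ (he t)
  have hnat : ‖(((k:ℚ) : ℚ_[l]))‖ ≤ B := by
    refine le_trans ?_ hB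
    have : ((k:ℚ) : ℚ_[l]) = ((k : ℤ) : ℚ_[l]) := by push_cast; ring
    rw [this]
    exact Padic.norm_int_le_one _
  simp only [Qpoly, Polynomial.coeff_add, Polynomial.coeff_sub]
  push_cast
  refine le_trans (Padic.nonarchimedean _ _) (max_le (le_trans (padic_norm_sub_le' _ _)
    (max_le (le_trans (padic_norm_sub_le' _ _) (max_le ?_ ?_)) ?_)) ?_)
  · exact hCXbound _ _ hnat
  · exact hCXbound _ _ hnat
  · exact hsumbound _ _
  · exact hsumbound _ _

end Bound

/-- **converse of Bertrand–Schmidt analogue.** Let `β ∈ ℚ_p` with `|β|_p > 1`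
and let `T(z) = ⌊βz⌋_p` be the beta-transformation.  If `S` is an infinite set of positive
integers with `1 ∈ S` such that every `k ∈ S` has an eventually periodic beta-expansion, then
`β` is algebraic over `ℚ` and its minimal polynomial, written
`X^n − a_1 X^(n−1) − ⋯ − a_n`, has all `a_j ∈ ℤ[1/p]`, `v_p(a_1) < 0`,
`v_p(a_j) ≥ v_p(a_1)` for `1 ≤ j ≤ n`, and all complex roots of archimedean absolute value
`≤ 1` (i.e. `β` is a Pisot–Chabauty or Salem–Chabauty number). -/
theorem padic_periodic_implies_PC_or_SC (p : ℕ) [Fact p.Prime] (β : ℚ_[p]) (hβ : 1 < ‖β‖)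
    (T : ℚ_[p] → ℚ_[p])
    (hT : ∀ z : ℚ_[p], ‖z‖ ≤ 1 → ‖T z‖ ≤ 1 ∧
      ∃ d : ℚ, 0 ≤ d ∧ d < 1 ∧ (∃ m : ℤ, ∃ k : ℕ, d = (m : ℚ) / (p : ℚ) ^ k) ∧
        β * z = T z + ((d : ℚ) : ℚ_[p]))
    (S : Set ℕ) (hSinf : S.Infinite) (h1S : 1 ∈ S) (hSpos : ∀ k ∈ S, 0 < k)
    (hper : ∀ k ∈ S, ∃ j m : ℕ, 1 ≤ m ∧
      T^[j + m] ((k : ℕ) : ℚ_[p]) = T^[j] ((k : ℕ) : ℚ_[p])) :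
    IsAlgebraic ℚ β ∧
    ∃ n : ℕ, ∃ a : ℕ → ℚ,
      minpoly ℚ β = Polynomial.X ^ n -
        ∑ j ∈ Finset.Icc 1 n, Polynomial.C (a j) * Polynomial.X ^ (n - j) ∧
      (∀ j, 1 ≤ j → j ≤ n → ∃ m : ℤ, ∃ k : ℕ, a j = (m : ℚ) / (p : ℚ) ^ k) ∧
      padicValRat p (a 1) < 0 ∧
      (∀ j, 1 ≤ j → j ≤ n → padicValRat p (a 1) ≤ padicValRat p (a j)) ∧
      (∀ w : ℂ, Polynomial.aeval w (minpoly ℚ β) = 0 → ‖w‖ ≤ 1) := by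
  classical
  have hβ0 : β ≠ 0 := by
    intro h; rw [h, norm_zero] at hβ; linarith
  -- digit function
  choose! hT1 D hd0 hd1 hdform hdeq using hT
  -- orbits stay in the unit ball
  have horb : ∀ (x : ℚ_[p]), ‖x‖ ≤ 1 → ∀ i, ‖T^[i] x‖ ≤ 1 := by
    intro x hx i
    induction i with
    | zero => simpa using hx
    | succ i ih => rw [Function.iterate_succ_apply']; exact hT1 _ ih
  -- fundamental orbit identity
  have hiden : ∀ (x : ℚ_[p]), ‖x‖ ≤ 1 → ∀ i, β ^ i * x =
      T^[i] x + ∑ t ∈ Finset.range i, ((D (T^[t] x) : ℚ) : ℚ_[p]) * β ^ (i - 1 - t) := by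
    intro x hx i
    induction i with
    | zero => simp
    | succ i ih =>
      have hstep : β * T^[i] x = T^[i + 1] x + ((D (T^[i] x) : ℚ) : ℚ_[p]) := by
        rw [Function.iterate_succ_apply']
        exact hdeq _ (horb x hx i)
      have hmul : β ^ (i + 1) * x = β * (β ^ i * x) := by ring
      rw [hmul, ih, mul_add, hstep]
      have hsum : β * ∑ t ∈ Finset.range i, ((D (T^[t] x) : ℚ) : ℚ_[p]) * β ^ (i - 1 - t) =
          ∑ t ∈ Finset.range i, ((D (T^[t] x) : ℚ) : ℚ_[p]) * β ^ (i - t) := by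
        rw [Finset.mul_sum]
        refine Finset.sum_congr rfl fun t ht => ?_
        have htlt : t < i := Finset.mem_range.1 ht
        have : β * β ^ (i - 1 - t) = β ^ (i - t) := by
          rw [← pow_succ']
          congr 1
          omega
        rw [← this]; ring
      rw [hsum, Finset.sum_range_succ]
      simp only [Nat.add_sub_cancel, Nat.sub_self, pow_zero, mul_one]
      ring
  -- norms of natural number casts
  have hnatnorm : ∀ (k : ℕ), ‖((k : ℕ) : ℚ_[p])‖ ≤ 1 := by
    intro k
    have : ((k : ℕ) : ℚ_[p]) = ((k : ℤ) : ℚ_[p]) := by push_cast; ring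
    rw [this]; exact Padic.norm_int_le_one _
  -- vanishing of the associated polynomials
  have hQzero : ∀ k ∈ S, ∀ j m : ℕ, 1 ≤ m → T^[j + m] ((k : ℕ) : ℚ_[p]) = T^[j] ((k : ℕ) : ℚ_[p]) →
      Polynomial.aeval β (Qpoly (fun t => D (T^[t] ((k : ℕ) : ℚ_[p]))) k j m) = 0 := by
    intro k hk j m hm hp
    set x : ℚ_[p] := ((k : ℕ) : ℚ_[p]) with hxdef
    have hx : ‖x‖ ≤ 1 := hnatnorm k
    have E1 := hiden x hx (j + m)
    have E2 := hiden x hx j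
    simp only [Qpoly, map_add, map_sub, map_mul, map_sum, Polynomial.aeval_C, map_pow,
      Polynomial.aeval_X, eq_ratCast]
    push_cast
    rw [show ((k : ℕ) : ℚ_[p]) = x from rfl]
    linear_combination E1 - E2 + hp
  -- data for k = 1
  obtain ⟨j1, m1, hm1, hper1⟩ := hper 1 h1S
  set e1 : ℕ → ℚ := fun t => D (T^[t] ((1 : ℕ) : ℚ_[p])) with he1
  have hQ1zero : Polynomial.aeval β (Qpoly e1 1 j1 m1) = 0 :=
    hQzero 1 h1S j1 m1 hm1 hper1
  have hQ1monic : (Qpoly e1 1 j1 m1).Monic := Qpoly_monic _ _ _ hm1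
  have hint : IsIntegral ℚ β := ⟨Qpoly e1 1 j1 m1, hQ1monic, by
    rwa [← Polynomial.aeval_def]⟩
  have halg : IsAlgebraic ℚ β := hint.isAlgebraic
  set F : ℚ[X] := minpoly ℚ β with hFdef
  have hFmonic : F.Monic := minpoly.monic hint
  set n : ℕ := F.natDegree with hndef
  have hn1 : 1 ≤ n := minpoly.natDegree_pos hint
  set a : ℕ → ℚ := fun j => -F.coeff (n - j) with hadef
  -- the cofactor H
  obtain ⟨HH, hHH⟩ : F ∣ Qpoly e1 1 j1 m1 := minpoly.dvd ℚ β hQ1zero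
  have hHHmonic : HH.Monic := hFmonic.of_mul_monic_left (hHH ▸ hQ1monic)
  -- coefficient bounds for F at an arbitrary prime
  have hcoeffBound : ∀ (l : ℕ), ∀ (_ : Fact l.Prime), ∀ (B : ℝ), 1 ≤ B →
      (∀ t, ‖((e1 t : ℚ) : ℚ_[l])‖ ≤ B) → ∀ i, ‖((F.coeff i : ℚ) : ℚ_[l])‖ ≤ B := by
    intro l hl B hB he i
    haveI := hl
    have hmap : Polynomial.map (algebraMap ℚ ℚ_[l]) (Qpoly e1 1 j1 m1) =
        Polynomial.map (algebraMap ℚ ℚ_[l]) F * Polynomial.map (algebraMap ℚ ℚ_[l]) HH := by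
      rw [hHH, Polynomial.map_mul]
    have := gauss_coeff_bound (Polynomial.map (algebraMap ℚ ℚ_[l]) F)
      (Polynomial.map (algebraMap ℚ ℚ_[l]) HH) (hFmonic.map _) (hHHmonic.map _) B hB ?_ i
    · rwa [Polynomial.coeff_map, eq_ratCast] at this
    · intro i'
      rw [← hmap, Polynomial.coeff_map, eq_ratCast]
      exact Qpoly_coeff_norm_le e1 1 j1 m1 B hB he i'
  -- digit bounds
  have hdigit_p : ∀ t, ‖((e1 t : ℚ) : ℚ_[p])‖ ≤ ‖β‖ := by
    intro t
    have hz : ‖T^[t] ((1 : ℕ) : ℚ_[p])‖ ≤ 1 := horb _ (hnatnorm 1) t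
    have heq : ((e1 t : ℚ) : ℚ_[p]) = β * T^[t] ((1 : ℕ) : ℚ_[p]) - T^[t + 1] ((1 : ℕ) : ℚ_[p]) := by
      rw [he1]
      have := hdeq _ hz
      rw [Function.iterate_succ_apply']
      rw [this]; ring
    rw [heq]
    refine le_trans (padic_norm_sub_le' _ _) (max_le ?_ ?_)
    · rw [norm_mul]
      calc ‖β‖ * ‖T^[t] ((1 : ℕ) : ℚ_[p])‖ ≤ ‖β‖ * 1 :=
        mul_le_mul_of_nonneg_left hz (norm_nonneg _)
      _ = ‖β‖ := mul_one _
    · exact le_trans (horb _ (hnatnorm 1) (t + 1)) (le_of_lt hβ)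
  have hdigit_l : ∀ (l : ℕ), ∀ (_ : Fact l.Prime), l ≠ p →
      ∀ z, ‖z‖ ≤ 1 → ‖((D z : ℚ) : ℚ_[l])‖ ≤ 1 := by
    intro l hl hlp z hz
    haveI := hl
    obtain ⟨m', k', hmk⟩ := hdform z hz
    have hpnorm : ‖((p : ℤ) : ℚ_[l])‖ = 1 := by
      refine le_antisymm (Padic.norm_int_le_one _) ?_
      by_contra hlt
      push_neg at hlt
      have := (Padic.norm_intCast_lt_one_iff (k := (p : ℤ))).1 hlt
      have hdvd : l ∣ p := by exact_mod_cast this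
      rcases (Nat.Prime.eq_one_or_self_of_dvd (Fact.out : p.Prime) l hdvd) with h | h
      · exact Nat.Prime.ne_one (Fact.out : l.Prime) h
      · exact hlp h
    rw [hmk]
    push_cast
    rw [norm_div, norm_pow]
    have : ‖((p : ℚ_[l]))‖ = 1 := by
      have : ((p : ℚ_[l])) = (((p : ℤ)) : ℚ_[l]) := by push_cast; ring
      rw [this, hpnorm]
    rw [this, one_pow, div_one]
    have : ((m' : ℚ_[l])) = (((m' : ℤ)) : ℚ_[l]) := by push_cast; ring
    rw [this]
    exact Padic.norm_int_le_one _
  -- coefficients of F are in Z[1/p]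
  have hZinv : ∀ i, ∃ m' : ℤ, ∃ k' : ℕ, F.coeff i = (m' : ℚ) / (p : ℚ) ^ k' := by
    intro i
    set q : ℚ := F.coeff i with hqdef
    rcases eq_or_ne q 0 with hq0 | hq0
    · exact ⟨0, 0, by rw [hq0]; norm_num⟩
    have hprimes : ∀ {l : ℕ}, l.Prime → l ∣ q.den → l = p := by
      intro l hl hldvd
      by_contra hlp
      haveI : Fact l.Prime := ⟨hl⟩
      have hb : ‖((q : ℚ) : ℚ_[l])‖ ≤ 1 := by
        refine hcoeffBound l ⟨hl⟩ 1 le_rfl ?_ i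
        intro t
        exact hdigit_l l ⟨hl⟩ hlp _ (horb _ (hnatnorm 1) t)
      have hq : ((q : ℚ) : ℚ_[l]) = ((q.num : ℤ) : ℚ_[l]) / (((q.den : ℤ)) : ℚ_[l]) := by
        conv_lhs => rw [← Rat.num_div_den q]
        push_cast
        ring
      have hnum : ‖((q.num : ℤ) : ℚ_[l])‖ = 1 := by
        refine le_antisymm (Padic.norm_int_le_one _) ?_
        by_contra hlt
        push_neg at hlt
        have hdvd := (Padic.norm_intCast_lt_one_iff (k := q.num)).1 hlt
        have hdvd' : l ∣ q.num.natAbs := by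
          have := Int.natAbs_dvd_natAbs.2 hdvd
          simpa using this
        have : l ∣ 1 := q.reduced ▸ Nat.dvd_gcd hdvd' hldvd
        exact Nat.Prime.one_lt hl |>.ne' (Nat.dvd_one.1 this)
      have hden_lt : ‖(((q.den : ℤ)) : ℚ_[l])‖ < 1 :=
        Padic.norm_intCast_lt_one_iff.2 (Int.natCast_dvd_natCast.2 hldvd)
      have hden_pos : 0 < ‖(((q.den : ℤ)) : ℚ_[l])‖ := by
        rw [norm_pos_iff]
        exact_mod_cast q.den_nz
      rw [hq, norm_div, hnum] at hb
      have : (1 : ℝ) < 1 / ‖(((q.den : ℤ)) : ℚ_[l])‖ := by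
        rw [lt_div_iff₀ hden_pos, one_mul]
        exact hden_lt
      linarith
    obtain ⟨K, hK⟩ : ∃ K, q.den = p ^ K :=
      ⟨q.den.primeFactorsList.length, Nat.eq_prime_pow_of_unique_prime_dvd q.den_nz hprimes⟩
    refine ⟨q.num, K, ?_⟩
    conv_lhs => rw [← Rat.num_div_den q, hK]
    push_cast
    ring
  -- p-adic bounds
  have hFcoeff_p : ∀ i, ‖((F.coeff i : ℚ) : ℚ_[p])‖ ≤ ‖β‖ :=
    hcoeffBound p ‹Fact p.Prime› ‖β‖ (le_of_lt hβ) hdigit_p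
  have hcn : ‖((F.coeff (n - 1) : ℚ) : ℚ_[p])‖ = ‖β‖ := by
    set n' : ℕ := n - 1 with hn'def
    have hn : n = n' + 1 := by omega
    have hFas : F = ∑ i ∈ Finset.range (n + 1), Polynomial.C (F.coeff i) * Polynomial.X ^ i := by
      conv_lhs => rw [Polynomial.as_sum_range_C_mul_X_pow F]
    have hsum0 : ∑ i ∈ Finset.range (n + 1), ((F.coeff i : ℚ) : ℚ_[p]) * β ^ i = 0 := by
      have h := minpoly.aeval ℚ β
      rw [← hFdef] at h
      conv_lhs at h => rw [hFas]
      simp only [map_sum, map_mul, Polynomial.aeval_C, map_pow, Polynomial.aeval_X,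
        eq_ratCast] at h
      exact h
    rw [hn] at hsum0
    rw [Finset.sum_range_succ, Finset.sum_range_succ] at hsum0
    have hcn1 : F.coeff (n' + 1) = 1 := by
      rw [show n' + 1 = n by omega]
      exact hFmonic.coeff_natDegree
    set γ : ℚ_[p] := β⁻¹ with hγdef
    have hβγ : β * γ = 1 := mul_inv_cancel₀ hβ0
    have hprod : ∀ i, i ≤ n' → β ^ i * γ ^ n' = γ ^ (n' - i) := by
      intro i hi
      have : γ ^ n' = γ ^ i * γ ^ (n' - i) := by rw [← pow_add]; congr 1; omega
      rw [this, ← mul_assoc, ← mul_pow, hβγ, one_pow, one_mul]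
    have hc : ((F.coeff n' : ℚ) : ℚ_[p]) =
        -β - ∑ i ∈ Finset.range n', ((F.coeff i : ℚ) : ℚ_[p]) * γ ^ (n' - i) := by
      have h2 := congrArg (fun y => y * γ ^ n') hsum0
      simp only [zero_mul, add_mul, Finset.sum_mul] at h2
      have e1 : ∑ i ∈ Finset.range n', ((F.coeff i : ℚ) : ℚ_[p]) * β ^ i * γ ^ n' =
          ∑ i ∈ Finset.range n', ((F.coeff i : ℚ) : ℚ_[p]) * γ ^ (n' - i) := by
        refine Finset.sum_congr rfl fun i hi => ?_
        rw [mul_assoc, hprod i (le_of_lt (Finset.mem_range.1 hi))]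
      have e2 : β ^ n' * γ ^ n' = 1 := by
        have := hprod n' le_rfl
        rwa [Nat.sub_self, pow_zero] at this
      have e3 : β ^ (n' + 1) * γ ^ n' = β := by
        rw [pow_succ', mul_assoc, e2, mul_one]
      rw [e1, hcn1] at h2
      push_cast at h2
      rw [mul_assoc, mul_assoc, e2, e3] at h2
      linear_combination h2
    have hγnorm : ‖γ‖ = ‖β‖⁻¹ := by rw [hγdef, norm_inv]
    have hγ1 : ‖γ‖ < 1 := by
      rw [hγnorm]
      rw [inv_lt_one_iff₀]
      right; exact hβ
    have hEbound : ‖∑ i ∈ Finset.range n', ((F.coeff i : ℚ) : ℚ_[p]) * γ ^ (n' - i)‖ ≤ 1 := by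
      refine padic_norm_sum_le _ _ 1 one_pos.le fun i hi => ?_
      have hi' := Finset.mem_range.1 hi
      rw [norm_mul, norm_pow]
      calc ‖((F.coeff i : ℚ) : ℚ_[p])‖ * ‖γ‖ ^ (n' - i) ≤ ‖β‖ * ‖γ‖ ^ (n' - i) :=
            mul_le_mul_of_nonneg_right (hFcoeff_p i) (pow_nonneg (norm_nonneg _) _)
        _ ≤ ‖β‖ * ‖γ‖ ^ 1 := by
            refine mul_le_mul_of_nonneg_left ?_ (norm_nonneg _)
            exact pow_le_pow_of_le_one (norm_nonneg _) (le_of_lt hγ1) (by omega)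
        _ = 1 := by rw [pow_one, hγnorm, mul_inv_cancel₀ (by positivity : ‖β‖ ≠ 0)]
    rw [hc]
    have : -β - ∑ i ∈ Finset.range n', ((F.coeff i : ℚ) : ℚ_[p]) * γ ^ (n' - i) =
        -(β + ∑ i ∈ Finset.range n', ((F.coeff i : ℚ) : ℚ_[p]) * γ ^ (n' - i)) := by ring
    rw [this, norm_neg, Padic.add_eq_max_of_ne (by
      intro h
      rw [← h] at hEbound
      linarith), max_eq_left (le_trans hEbound (le_of_lt hβ))]
  -- representation of F
  have hrep : F = Polynomial.X ^ n -
      ∑ j ∈ Finset.Icc 1 n, Polynomial.C (a j) * Polynomial.X ^ (n - j) := by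
    have hsum : ∑ j ∈ Finset.Icc 1 n, Polynomial.C (a j) * Polynomial.X ^ (n - j) =
        -∑ i ∈ Finset.range n, Polynomial.C (F.coeff i) * Polynomial.X ^ i := by
      rw [← Finset.sum_neg_distrib]
      refine Finset.sum_bij' (fun j _ => n - j) (fun i _ => n - i) ?_ ?_ ?_ ?_ ?_
      · intro j hj
        obtain ⟨h1, h2⟩ := Finset.mem_Icc.1 hj
        show n - j ∈ Finset.range n
        exact Finset.mem_range.2 (by omega)
      · intro i hi
        have := Finset.mem_range.1 hi
        show n - i ∈ Finset.Icc 1 n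
        exact Finset.mem_Icc.2 ⟨by omega, by omega⟩
      · intro j hj
        obtain ⟨h1, h2⟩ := Finset.mem_Icc.1 hj
        show n - (n - j) = j
        omega
      · intro i hi
        have := Finset.mem_range.1 hi
        show n - (n - i) = i
        omega
      · intro j hj
        show Polynomial.C (a j) * Polynomial.X ^ (n - j) =
          -(Polynomial.C (F.coeff (n - j)) * Polynomial.X ^ (n - j))
        rw [hadef]
        simp only [map_neg]
        ring
    rw [hsum]
    have hFas : F = ∑ i ∈ Finset.range (n + 1), Polynomial.C (F.coeff i) * Polynomial.X ^ i := by
      conv_lhs => rw [Polynomial.as_sum_range_C_mul_X_pow F]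
    rw [Finset.sum_range_succ] at hFas
    have hcoeffn : F.coeff n = 1 := hFmonic.coeff_natDegree
    rw [hcoeffn, map_one, one_mul] at hFas
    conv_lhs => rw [hFas]
    ring
  -- valuation facts
  -- norm of a 1
  have ha1norm : ‖((a 1 : ℚ) : ℚ_[p])‖ = ‖β‖ := by
    rw [hadef]
    push_cast
    rw [norm_neg]
    exact hcn
  have hp1R : (1 : ℝ) < (p : ℝ) := by
    exact_mod_cast (Fact.out : p.Prime).one_lt
  have hvalnorm : ∀ q : ℚ, q ≠ 0 → ‖((q : ℚ) : ℚ_[p])‖ = (p : ℝ) ^ (-padicValRat p q) := by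
    intro q hq
    rw [Padic.norm_eq_zpow_neg_valuation (by exact_mod_cast hq)]
    rw [Padic.valuation_ratCast]
  have ha1ne : a 1 ≠ 0 := by
    intro h
    rw [h] at ha1norm
    simp at ha1norm
    linarith
  have hval1 : padicValRat p (a 1) < 0 := by
    by_contra hge
    push_neg at hge
    have := hvalnorm (a 1) ha1ne
    rw [ha1norm] at this
    have hle : ((p : ℝ)) ^ (-padicValRat p (a 1)) ≤ 1 :=
      zpow_le_one_of_nonpos₀ (le_of_lt hp1R) (by omega)
    rw [← this] at hle
    linarith
  have hvalj : ∀ j, 1 ≤ j → j ≤ n → padicValRat p (a 1) ≤ padicValRat p (a j) := by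
    intro j hj1 hjn
    rcases eq_or_ne (a j) 0 with haj | haj
    · rw [haj]
      simp only [padicValRat.zero]
      exact le_of_lt hval1
    · have hajnorm : ‖((a j : ℚ) : ℚ_[p])‖ ≤ ‖β‖ := by
        rw [hadef]
        push_cast
        rw [norm_neg]
        exact hFcoeff_p (n - j)
      rw [← ha1norm] at hajnorm
      rw [hvalnorm (a j) haj, hvalnorm (a 1) ha1ne] at hajnorm
      have := (zpow_le_zpow_iff_right₀ hp1R).1 hajnorm
      omega
  -- complex roots
  have hcomplex : ∀ w : ℂ, Polynomial.aeval w F = 0 → ‖w‖ ≤ 1 := by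
    intro w hw
    by_contra hgt
    push_neg at hgt
    set r : ℝ := ‖w‖ with hrdef
    have hr1 : 1 < r := hgt
    have hr0 : 0 < r := lt_trans one_pos hr1
    set Cb : ℝ := 2 * r / (r - 1) ^ 2 with hCbdef
    obtain ⟨k, hkS, hklt⟩ := hSinf.exists_gt ⌈Cb⌉₊
    have hkCb : Cb < (k : ℝ) := by
      refine lt_of_le_of_lt (Nat.le_ceil _) ?_
      exact_mod_cast hklt
    obtain ⟨j, m, hm, hperk⟩ := hper k hkS
    set e : ℕ → ℚ := fun t => D (T^[t] ((k : ℕ) : ℚ_[p])) with hedef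
    have hQz := hQzero k hkS j m hm hperk
    obtain ⟨G, hG⟩ : F ∣ Qpoly e k j m := minpoly.dvd ℚ β hQz
    have hwQ : Polynomial.aeval w (Qpoly e k j m) = 0 := by
      rw [hG, map_mul, hw, zero_mul]
    simp only [Qpoly, map_add, map_sub, map_mul, map_sum, Polynomial.aeval_C, map_pow,
      Polynomial.aeval_X, eq_ratCast] at hwQ
    have hkey : (k : ℂ) * (w ^ (j + m) - w ^ j) =
        (∑ t ∈ Finset.range (j + m), ((e t : ℚ) : ℂ) * w ^ (j + m - 1 - t)) -
        ∑ t ∈ Finset.range j, ((e t : ℚ) : ℂ) * w ^ (j - 1 - t) := by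
      push_cast at hwQ ⊢
      linear_combination hwQ
    have hdig : ∀ t, ‖((e t : ℚ) : ℂ)‖ ≤ 1 := by
      intro t
      have h0 := hd0 _ (horb _ (hnatnorm k) t)
      have h1 := hd1 _ (horb _ (hnatnorm k) t)
      rw [show ((e t : ℚ) : ℂ) = ((e t : ℝ) : ℂ) by push_cast; ring, Complex.norm_real, Real.norm_eq_abs]
      rw [abs_of_nonneg (by exact_mod_cast h0)]
      exact le_of_lt (by exact_mod_cast h1)
    have hgeom : ∀ L : ℕ, ‖∑ t ∈ Finset.range L, ((e t : ℚ) : ℂ) * w ^ (L - 1 - t)‖ ≤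
        r ^ L / (r - 1) := by
      intro L
      refine le_trans (norm_sum_le _ _) ?_
      have hterm : ∀ t ∈ Finset.range L, ‖((e t : ℚ) : ℂ) * w ^ (L - 1 - t)‖ ≤
          r ^ (L - 1 - t) := by
        intro t ht
        rw [norm_mul, norm_pow]
        calc ‖((e t : ℚ) : ℂ)‖ * r ^ (L - 1 - t) ≤ 1 * r ^ (L - 1 - t) :=
              mul_le_mul_of_nonneg_right (hdig t) (pow_nonneg (le_of_lt hr0) _)
          _ = r ^ (L - 1 - t) := one_mul _
      refine le_trans (Finset.sum_le_sum hterm) ?_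
      rw [Finset.sum_range_reflect (fun t => r ^ t) L]
      rw [geom_sum_eq (ne_of_gt hr1) L]
      refine (div_le_div_iff_of_pos_right (by linarith : (0:ℝ) < r - 1)).2 (by linarith)
    -- lower bound for the left-hand side
    have hlhs : (k : ℝ) * (r ^ (j + m - 1) * (r - 1)) ≤
        ‖(k : ℂ) * (w ^ (j + m) - w ^ j)‖ := by
      rw [norm_mul, Complex.norm_natCast]
      refine mul_le_mul_of_nonneg_left ?_ (Nat.cast_nonneg k)
      have h1 : r ^ (j + m) - r ^ j ≤ ‖w ^ (j + m) - w ^ j‖ := by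
        have := norm_sub_norm_le (w ^ (j + m)) (w ^ j)
        rwa [norm_pow, norm_pow] at this
      have h2 : r ^ j ≤ r ^ (j + m - 1) := pow_le_pow_right₀ (le_of_lt hr1) (by omega)
      have h3 : r ^ (j + m) = r ^ (j + m - 1) * r := by
        rw [← pow_succ]
        congr 1
        omega
      nlinarith [pow_pos hr0 (j + m - 1)]
    -- upper bound for the right-hand side
    have hrhs : ‖(k : ℂ) * (w ^ (j + m) - w ^ j)‖ ≤ 2 * r ^ (j + m) / (r - 1) := by
      rw [hkey]
      refine le_trans (norm_sub_le _ _) ?_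
      have g1 := hgeom (j + m)
      have g2 := hgeom j
      have h2 : r ^ j ≤ r ^ (j + m) := pow_le_pow_right₀ (le_of_lt hr1) (by omega)
      have hpos : (0:ℝ) < r - 1 := by linarith
      calc ‖∑ t ∈ Finset.range (j + m), ((e t : ℚ) : ℂ) * w ^ (j + m - 1 - t)‖ +
            ‖∑ t ∈ Finset.range j, ((e t : ℚ) : ℂ) * w ^ (j - 1 - t)‖ ≤
            r ^ (j + m) / (r - 1) + r ^ j / (r - 1) := add_le_add g1 g2
        _ ≤ 2 * r ^ (j + m) / (r - 1) := by
            rw [← add_div]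
            exact (div_le_div_iff_of_pos_right hpos).2 (by linarith)
    -- combine
    have hcomb : (k : ℝ) * (r ^ (j + m - 1) * (r - 1)) ≤ 2 * r ^ (j + m) / (r - 1) :=
      le_trans hlhs hrhs
    have hpos : (0:ℝ) < r - 1 := by linarith
    have hP : (0:ℝ) < r ^ (j + m - 1) := pow_pos hr0 _
    have h3 : r ^ (j + m) = r ^ (j + m - 1) * r := by
      rw [← pow_succ]
      congr 1
      omega
    rw [h3] at hcomb
    have hcomb' : (k : ℝ) * (r ^ (j + m - 1) * (r - 1)) * (r - 1) ≤ 2 * (r ^ (j + m - 1) * r) :=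
      (le_div_iff₀ hpos).1 hcomb
    rw [hCbdef] at hkCb
    have hkCb' : 2 * r < (k : ℝ) * (r - 1) ^ 2 :=
      (div_lt_iff₀ (by positivity)).1 hkCb
    nlinarith [mul_pos hP hpos, mul_pos hP (mul_pos hpos hpos)]
  refine ⟨halg, n, a, hrep, ?_, hval1, hvalj, hcomplex⟩
  intro j hj1 hjn
  obtain ⟨m', k', hmk⟩ := hZinv (n - j)
  exact ⟨-m', k', by rw [hadef]; push_cast; rw [hmk]; ring⟩
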